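/- Suppose v ∈ tsns⊗tsns (mod ℂM_0⊗M_0) satisfies x∗v ∈ Im(1⊗1−τ) for all x ∈ tsns. Then there exists u ∈ Im(1⊗1−τ) such that v − u ∈ ℂM_0⊗M_0. -/
import Mathlib


open Finsupp

/-- Basis indices of the twisted `N = 1` Schrödinger–Neveu–Schwarz algebra.
`L n` is `L_n` (`n ∈ ℤ`), `G k` is `G_{k+1/2}` (`k ∈ ℤ`),
`Y k` is `Y_{k/2}` and `M k` is `M_{k/2}` (`k ∈ ℤ`, so `k/2` ranges over `(1/2)ℤ`). -/
inductive TIdx : Type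
  | L : ℤ → TIdx
  | G : ℤ → TIdx
  | Y : ℤ → TIdx
  | M : ℤ → TIdx
  deriving DecidableEq

noncomputable section

/-- The underlying vector space of `tsns`: the free `ℂ`-vector space on the basis. -/
abbrev Tsns : Type := TIdx →₀ ℂ

/-- The basis vectors. -/
def bs (i : TIdx) : Tsns := Finsupp.single i 1

/-- The `ℤ₂`-parity of a basis vector. -/
def parity : TIdx → ZMod 2
  | .L _ => 0
  | .G _ => 1
  | .Y k => (k : ZMod 2)
  | .M k => (k : ZMod 2)

/-- The sign `(-1)^{ab}` for parities `a, b`. -/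
def sg (a b : ZMod 2) : ℂ := if a = 1 ∧ b = 1 then -1 else 1

/-- The super-bracket of `tsns` on basis vectors. -/
def brIdx : TIdx → TIdx → Tsns
  | .L n, .L m => ((m : ℂ) - n) • bs (.L (n + m))
  | .L n, .G k => ((k : ℂ) + 1/2 - n/2) • bs (.G (k + n))
  | .G k, .L n => (-((k : ℂ) + 1/2 - n/2)) • bs (.G (k + n))
  | .L n, .Y k => (if (k : ZMod 2) = 0 then ((k : ℂ) - n)/2 else (k : ℂ)/2) • bs (.Y (k + 2*n))
  | .Y k, .L n => (-(if (k : ZMod 2) = 0 then ((k : ℂ) - n)/2 else (k : ℂ)/2)) • bs (.Y (k + 2*n))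
  | .L n, .M k => (if (k : ZMod 2) = 0 then (k : ℂ)/2 else ((k : ℂ) + n)/2) • bs (.M (k + 2*n))
  | .M k, .L n => (-(if (k : ZMod 2) = 0 then (k : ℂ)/2 else ((k : ℂ) + n)/2)) • bs (.M (k + 2*n))
  | .G k, .G l => (2 : ℂ) • bs (.L (k + l + 1))
  | .G l, .Y k => (if (k : ZMod 2) = 0 then ((k : ℂ) - 2*l - 1)/4 else 2) • bs (.Y (k + 2*l + 1))
  | .Y k, .G l => (if (k : ZMod 2) = 0 then -(((k : ℂ) - 2*l - 1)/4) else 2) • bs (.Y (k + 2*l + 1))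
  | .G l, .M k => (if (k : ZMod 2) = 0 then (k : ℂ)/4 else 2) • bs (.M (k + 2*l + 1))
  | .M k, .G l => (if (k : ZMod 2) = 0 then -((k : ℂ)/4) else 2) • bs (.M (k + 2*l + 1))
  | .Y k, .Y l =>
      (if (k : ZMod 2) = 0 then (if (l : ZMod 2) = 0 then ((l : ℂ) - k)/4 else (l : ℂ)/4)
       else (if (l : ZMod 2) = 0 then -((k : ℂ)/4) else 2)) • bs (.M (k + l))
  | _, _ => 0

/-- The super-bracket of `tsns`, as a bilinear map. -/
def brk : Tsns →ₗ[ℂ] Tsns →ₗ[ℂ] Tsns :=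
  Finsupp.lsum ℂ fun i => LinearMap.toSpanSingleton ℂ _
    (Finsupp.lsum ℂ fun j => LinearMap.toSpanSingleton ℂ Tsns (brIdx i j))

/-- `x` is homogeneous of parity `σ`. -/
def IsHom (σ : ZMod 2) (x : Tsns) : Prop := ∀ i ∈ x.support, parity i = σ

/-- The tensor square `tsns ⊗ tsns`, modelled as the free vector space on pairs
of basis indices. -/
abbrev T2 : Type := (TIdx × TIdx) →₀ ℂ

/-- The tensor cube `tsns ⊗ tsns ⊗ tsns`. -/
abbrev T3 : Type := (TIdx × TIdx × TIdx) →₀ ℂ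

/-- The tensor product map `tsns × tsns → tsns ⊗ tsns`. -/
def tp : Tsns →ₗ[ℂ] Tsns →ₗ[ℂ] T2 :=
  Finsupp.lsum ℂ fun i => LinearMap.toSpanSingleton ℂ _
    (Finsupp.lsum ℂ fun j => LinearMap.toSpanSingleton ℂ T2 (Finsupp.single (i, j) 1))

/-- The tensor product map `tsns × tsns × tsns → tsns ⊗ tsns ⊗ tsns`. -/
def t3 : Tsns →ₗ[ℂ] Tsns →ₗ[ℂ] Tsns →ₗ[ℂ] T3 :=
  Finsupp.lsum ℂ fun i => LinearMap.toSpanSingleton ℂ _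
    (Finsupp.lsum ℂ fun j => LinearMap.toSpanSingleton ℂ _
      (Finsupp.lsum ℂ fun k => LinearMap.toSpanSingleton ℂ T3 (Finsupp.single (i, j, k) 1)))

/-- The adjoint diagonal action of `tsns` on `tsns ⊗ tsns`:
`x ∗ (a ⊗ b) = [x,a] ⊗ b + (-1)^{[x][a]} a ⊗ [x,b]`. -/
def star2 : Tsns →ₗ[ℂ] T2 →ₗ[ℂ] T2 :=
  Finsupp.lsum ℂ fun i => LinearMap.toSpanSingleton ℂ _
    (Finsupp.lsum ℂ fun p => LinearMap.toSpanSingleton ℂ T2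
      (tp (brIdx i p.1) (bs p.2) + sg (parity i) (parity p.1) • tp (bs p.1) (brIdx i p.2)))

/-- The adjoint diagonal action of `tsns` on `tsns ⊗ tsns ⊗ tsns`. -/
def star3 : Tsns →ₗ[ℂ] T3 →ₗ[ℂ] T3 :=
  Finsupp.lsum ℂ fun i => LinearMap.toSpanSingleton ℂ _
    (Finsupp.lsum ℂ fun t => LinearMap.toSpanSingleton ℂ T3
      (t3 (brIdx i t.1) (bs t.2.1) (bs t.2.2)
        + sg (parity i) (parity t.1) • t3 (bs t.1) (brIdx i t.2.1) (bs t.2.2)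
        + (sg (parity i) (parity t.1) * sg (parity i) (parity t.2.1)) •
            t3 (bs t.1) (bs t.2.1) (brIdx i t.2.2)))

/-- The super-twist map `τ(x ⊗ y) = (-1)^{[x][y]} y ⊗ x`. -/
def tau : T2 →ₗ[ℂ] T2 :=
  Finsupp.lsum ℂ fun p => LinearMap.toSpanSingleton ℂ T2
    (sg (parity p.1) (parity p.2) • Finsupp.single (p.2, p.1) 1)

/-- The super-cyclic map `ξ(x₁ ⊗ x₂ ⊗ x₃) = (-1)^{[x₁]([x₂]+[x₃])} x₂ ⊗ x₃ ⊗ x₁`. -/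
def xi : T3 →ₗ[ℂ] T3 :=
  Finsupp.lsum ℂ fun t => LinearMap.toSpanSingleton ℂ T3
    (sg (parity t.1) (parity t.2.1 + parity t.2.2) • Finsupp.single (t.2.1, t.2.2, t.1) 1)

/-- `Im(1⊗1 - τ) ⊆ tsns ⊗ tsns`. -/
def ImSkew : Submodule ℂ T2 := LinearMap.range (LinearMap.id - tau)

/-- `ℂ M₀ ⊗ M₀`, the tensor square of the center. -/
def CC : Submodule ℂ T2 := Submodule.span ℂ {Finsupp.single (TIdx.M 0, TIdx.M 0) 1}

/-- The `(1/2)ℤ`-degree of a basis vector, recorded in half-units (i.e. twice the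
degree, an integer). -/
def hdeg : TIdx → ℤ
  | .L n => 2*n
  | .G k => 2*k + 1
  | .Y k => k
  | .M k => k

/-- The degree (in half-units) of a basis vector of the tensor square. -/
def hdeg2 (p : TIdx × TIdx) : ℤ := hdeg p.1 + hdeg p.2

/-- `d : tsns → tsns ⊗ tsns` is a homogeneous derivation of `ℤ₂`-parity `π`:
`d [x,y] = (-1)^{[d][x]} x ∗ d y - (-1)^{[y]([d]+[x])} y ∗ d x`
(stated on homogeneous basis vectors). -/
def IsDerP (π : ZMod 2) (d : Tsns →ₗ[ℂ] T2) : Prop :=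
  ∀ i j : TIdx, d (brk (bs i) (bs j)) =
    sg π (parity i) • star2 (bs i) (d (bs j))
      - sg (parity j) (π + parity i) • star2 (bs j) (d (bs i))

/-- An even derivation `tsns → tsns ⊗ tsns`. -/
def IsDer2 (d : Tsns →ₗ[ℂ] T2) : Prop := IsDerP 0 d

/-- The special derivations `d^♮` on basis vectors (parameters `α, α†, β, β†`). -/
def dnatB (a a' b b' : ℂ) : TIdx → T2
  | .L n => (a * n) • Finsupp.single (.M 0, .M (2*n)) 1
      + (a' * n) • Finsupp.single (.M (2*n), .M 0) 1
  | .G k => (a * ((k : ℂ) + 1/2)) • Finsupp.single (.M 0, .M (2*k+1)) 1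
      + (a' * ((k : ℂ) + 1/2)) • Finsupp.single (.M (2*k+1), .M 0) 1
  | .Y k => b • Finsupp.single (.M 0, .Y k) 1 + b' • Finsupp.single (.Y k, .M 0) 1
  | .M k => (2*b) • Finsupp.single (.M 0, .M k) 1 + (2*b') • Finsupp.single (.M k, .M 0) 1

/-- The special derivations `d^♮ : tsns → tsns ⊗ tsns`. -/
def dnat (a a' b b' : ℂ) : Tsns →ₗ[ℂ] T2 :=
  Finsupp.lsum ℂ fun i => LinearMap.toSpanSingleton ℂ T2 (dnatB a a' b b' i)

/-- Multiplication by `(-1)^{σ·[u]}` on `tsns ⊗ tsns`. -/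
def twT2 (σ : ZMod 2) : T2 →ₗ[ℂ] T2 :=
  Finsupp.lsum ℂ fun p => LinearMap.toSpanSingleton ℂ T2
    (sg σ (parity p.1 + parity p.2) • Finsupp.single p 1)

/-- The coboundary `Δ_r (x) = (-1)^{[r][x]} x ∗ r`. -/
def Δr (r : T2) : Tsns →ₗ[ℂ] T2 :=
  Finsupp.lsum ℂ fun i => LinearMap.toSpanSingleton ℂ T2 (star2 (bs i) (twT2 (parity i) r))

/-- The embedding `tsns ⊗ (tsns ⊗ tsns) → tsns ⊗ tsns ⊗ tsns`. -/
def t13 : Tsns →ₗ[ℂ] T2 →ₗ[ℂ] T3 :=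
  Finsupp.lsum ℂ fun i => LinearMap.toSpanSingleton ℂ _
    (Finsupp.lsum ℂ fun q => LinearMap.toSpanSingleton ℂ T3 (Finsupp.single (i, q.1, q.2) 1))

/-- `1 ⊗ D : tsns ⊗ tsns → tsns ⊗ tsns ⊗ tsns` for an (even) linear map `D`. -/
def oneTensor (D : Tsns →ₗ[ℂ] T2) : T2 →ₗ[ℂ] T3 :=
  Finsupp.lsum ℂ fun p => LinearMap.toSpanSingleton ℂ T3 (t13 (bs p.1) (D (bs p.2)))

/-- The summand of `c(r)` coming from a pair of basis tensors
`p = a_i ⊗ b_i`, `q = a_j ⊗ b_j`. -/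
def cB (p q : TIdx × TIdx) : T3 :=
  sg (parity q.1) (parity p.2) • t3 (brIdx p.1 q.1) (bs p.2) (bs q.2)
    + t3 (bs p.1) (brIdx p.2 q.1) (bs q.2)
    + sg (parity q.1) (parity p.2) • t3 (bs p.1) (bs q.1) (brIdx p.2 q.2)

/-- `c` as a bilinear map. -/
def cY : T2 →ₗ[ℂ] T2 →ₗ[ℂ] T3 :=
  Finsupp.lsum ℂ fun p => LinearMap.toSpanSingleton ℂ _
    (Finsupp.lsum ℂ fun q => LinearMap.toSpanSingleton ℂ T3 (cB p q))

/-- `c(r) = [r¹²,r¹³] + [r¹²,r²³] + [r¹³,r²³]`. -/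
def cr (r : T2) : T3 := cY r r

/-- `(tsns, [·,·], D)` is a Lie superbialgebra: `Im D ⊆ Im(1⊗1−τ)`, the super
co-Jacobi identity holds, and `D` is a 1-cocycle. -/
def IsSuperBialg (D : Tsns →ₗ[ℂ] T2) : Prop :=
  (∀ x : Tsns, D x ∈ ImSkew) ∧
  (∀ x : Tsns,
    oneTensor D (D x) + xi (oneTensor D (D x)) + xi (xi (oneTensor D (D x))) = 0) ∧
  (∀ i j : TIdx, D (brk (bs i) (bs j)) =
    star2 (bs i) (D (bs j)) - sg (parity i) (parity j) • star2 (bs j) (D (bs i)))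

end

section Aux
open Finsupp
lemma sg_zero_left (b : ZMod 2) : sg 0 b = 1 := by simp [sg]
lemma sg_comm (a b : ZMod 2) : sg a b = sg b a := by simp [sg, and_comm]
lemma sg_ne_zero (a b : ZMod 2) : sg a b ≠ 0 := by unfold sg; split <;> norm_num
lemma sg_mul_self (a b : ZMod 2) : sg a b * sg a b = 1 := by unfold sg; split <;> norm_num

lemma tp_bs_bs (i j : TIdx) : tp (bs i) (bs j) = Finsupp.single (i, j) 1 := by
  simp [tp, bs, Finsupp.lsum_single, LinearMap.toSpanSingleton_apply]

lemma star2_bs (i : TIdx) (w : T2) :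
    star2 (bs i) w = w.sum fun p c => c •
      (tp (brIdx i p.1) (bs p.2) + sg (parity i) (parity p.1) • tp (bs p.1) (brIdx i p.2)) := by
  rw [star2, bs, Finsupp.lsum_single, LinearMap.toSpanSingleton_apply, one_smul,
    Finsupp.lsum_apply]
  rfl

lemma tau_sum (w : T2) :
    tau w = w.sum fun p c => c • (sg (parity p.1) (parity p.2) • Finsupp.single (p.2, p.1) 1) := by
  rw [tau, Finsupp.lsum_apply]
  rfl

lemma tau_apply (w : T2) (a b : TIdx) :
    tau w (a, b) = sg (parity b) (parity a) * w (b, a) := by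
  rw [tau_sum, Finsupp.sum_apply, Finsupp.sum]
  rw [Finset.sum_eq_single (b, a)]
  · simp [Finsupp.single_apply, sg_comm, mul_comm]
  · intro p hp hne
    simp only [Finsupp.smul_apply, Finsupp.single_apply, smul_eq_mul]
    rw [if_neg, mul_zero, mul_zero]
    rintro ⟨rfl, rfl⟩; exact hne rfl
  · intro hmem
    simp [Finsupp.notMem_support_iff.mp hmem]
end Aux
lemma tau_tau (w : T2) : tau (tau w) = w := by
  ext q
  obtain ⟨a, b⟩ := q
  rw [tau_apply, tau_apply, ← mul_assoc, sg_comm, sg_mul_self, one_mul]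

lemma mem_ImSkew_iff (w : T2) (hw : w ∈ ImSkew) : w + tau w = 0 := by
  obtain ⟨y, hy⟩ := hw
  simp only [LinearMap.sub_apply, LinearMap.id_apply] at hy
  rw [← hy, map_sub, tau_tau]
  abel

def sN (N : ℤ) : TIdx → TIdx
  | .L m => .L (N + m)
  | .G k => .G (k + N)
  | .Y k => .Y (k + 2*N)
  | .M k => .M (k + 2*N)

noncomputable def cN (N : ℤ) : TIdx → ℂ
  | .L m => (m : ℂ) - N
  | .G k => (k : ℂ) + 1/2 - N/2
  | .Y k => if (k : ZMod 2) = 0 then ((k : ℂ) - N)/2 else (k : ℂ)/2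
  | .M k => if (k : ZMod 2) = 0 then (k : ℂ)/2 else ((k : ℂ) + N)/2

lemma brIdx_L (N : ℤ) (i : TIdx) : brIdx (.L N) i = cN N i • bs (sN N i) := by
  cases i <;> rfl

lemma hdeg_sN (N : ℤ) (i : TIdx) : hdeg (sN N i) = hdeg i + 2*N := by
  cases i <;> simp [sN, hdeg] <;> ring

lemma sN_inj {N : ℤ} {i j : TIdx} (h : sN N i = sN N j) : i = j := by
  cases i <;> cases j <;> simp_all [sN] <;> omega

lemma parity_sN (N : ℤ) (i : TIdx) : parity (sN N i) = parity i := by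
  cases i <;> simp [sN, parity] <;> push_cast <;>
    simp [show ((2: ZMod 2)) = 0 by decide]
lemma star2_L_apply (N : ℤ) (v : T2) (q : TIdx × TIdx) :
    star2 (bs (.L N)) v q = v.sum fun p c =>
      c * (cN N p.1 * (if (sN N p.1, p.2) = q then 1 else 0)
         + cN N p.2 * (if (p.1, sN N p.2) = q then 1 else 0)) := by
  rw [star2_bs, Finsupp.sum_apply]
  apply Finsupp.sum_congr
  intro p _
  rw [brIdx_L, brIdx_L, LinearMap.map_smul₂, map_smul, tp_bs_bs, tp_bs_bs]
  simp only [show parity (TIdx.L N) = 0 from rfl, sg_zero_left, one_smul,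
    Finsupp.smul_apply, Finsupp.add_apply, Finsupp.single_apply, smul_eq_mul]

lemma eval1 (B N : ℤ) (hN : N = 2*B+2) (hB : 0 ≤ B) (v : T2)
    (Hsupp : ∀ p ∈ v.support, |hdeg p.1| ≤ B ∧ |hdeg p.2| ≤ B)
    (a b : TIdx) (ha : |hdeg a| ≤ B) :
    star2 (bs (.L N)) v (sN N a, b) = v (a, b) * cN N a := by
  obtain ⟨ha1, ha2⟩ := abs_le.mp ha
  rw [star2_L_apply, Finsupp.sum, Finset.sum_eq_single (a, b)]
  · rw [if_pos rfl, if_neg, mul_zero, add_zero, mul_one]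
    intro hh
    have h1 : hdeg a = hdeg (sN N a) := congrArg (fun p => hdeg p.1) hh
    rw [hdeg_sN] at h1
    omega
  · intro p hp hne
    obtain ⟨hp1, hp2⟩ := Hsupp p hp
    obtain ⟨hp1a, hp1b⟩ := abs_le.mp hp1
    rw [if_neg, if_neg, mul_zero, mul_zero, add_zero, mul_zero]
    · intro hh
      have h1 : hdeg p.1 = hdeg (sN N a) := congrArg (fun p => hdeg p.1) hh
      rw [hdeg_sN] at h1
      omega
    · intro hh
      obtain ⟨h1, h2⟩ := Prod.mk.injEq .. ▸ hh
      exact hne (by rw [← sN_inj h1, ← h2])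
  · intro hmem
    rw [Finsupp.notMem_support_iff.mp hmem, zero_mul]

lemma eval2 (B N : ℤ) (hN : N = 2*B+2) (hB : 0 ≤ B) (v : T2)
    (Hsupp : ∀ p ∈ v.support, |hdeg p.1| ≤ B ∧ |hdeg p.2| ≤ B)
    (a b : TIdx) (ha : |hdeg a| ≤ B) (hb : |hdeg b| ≤ B) :
    star2 (bs (.L N)) v (b, sN N a) = v (b, a) * cN N a := by
  obtain ⟨ha1, ha2⟩ := abs_le.mp ha
  obtain ⟨hb1, hb2⟩ := abs_le.mp hb
  rw [star2_L_apply, Finsupp.sum, Finset.sum_eq_single (b, a)]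
  · rw [if_pos rfl, if_neg, mul_zero, zero_add, mul_one]
    intro hh
    have h1 : hdeg (sN N b) = hdeg b := congrArg (fun p => hdeg p.1) hh
    rw [hdeg_sN] at h1
    omega
  · intro p hp hne
    obtain ⟨hp1, hp2⟩ := Hsupp p hp
    obtain ⟨hp1a, hp1b⟩ := abs_le.mp hp1
    rw [if_neg, if_neg, mul_zero, mul_zero, add_zero, mul_zero]
    · intro hh
      obtain ⟨h1, h2⟩ := Prod.mk.injEq .. ▸ hh
      exact hne (by rw [← h1, ← sN_inj h2])
    · intro hh
      have h1 : hdeg (sN N p.1) = hdeg b := congrArg (fun p => hdeg p.1) hh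
      rw [hdeg_sN] at h1
      omega
  · intro hmem
    rw [Finsupp.notMem_support_iff.mp hmem, zero_mul]

lemma cN_eq_zero (B N : ℤ) (hN : N = 2*B+2) (a : TIdx) (ha : |hdeg a| ≤ B)
    (h0 : cN N a = 0) : a = .M 0 := by
  obtain ⟨ha1, ha2⟩ := abs_le.mp ha
  cases a with
  | L m =>
    exfalso
    simp only [cN, sub_eq_zero] at h0
    have : m = N := by exact_mod_cast h0
    simp [hdeg] at ha1 ha2
    omega
  | G k =>
    exfalso
    simp only [cN] at h0
    have h1 : ((2*k + 1 : ℤ) : ℂ) = ((N : ℤ) : ℂ) := by push_cast; linear_combination 2 * h0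
    have : 2*k + 1 = N := by exact_mod_cast h1
    omega
  | Y k =>
    exfalso
    simp only [cN] at h0
    split at h0
    · have h1 : (k : ℂ) - N = 0 := by
        rcases div_eq_zero_iff.mp h0 with h | h
        · exact h
        · norm_num at h
      have : k = N := by
        have := sub_eq_zero.mp h1
        exact_mod_cast this
      simp [hdeg] at ha1 ha2
      omega
    · rename_i hk
      have h1 : (k : ℂ) = 0 := by
        rcases div_eq_zero_iff.mp h0 with h | h
        · exact h
        · norm_num at h
      have : k = 0 := by exact_mod_cast h1
      subst this
      simp at hk
  | M k =>
    simp only [cN] at h0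
    split at h0
    · have h1 : (k : ℂ) = 0 := by
        rcases div_eq_zero_iff.mp h0 with h | h
        · exact h
        · norm_num at h
      have : k = 0 := by exact_mod_cast h1
      rw [this]
    · exfalso
      have h1 : (k : ℂ) + N = 0 := by
        rcases div_eq_zero_iff.mp h0 with h | h
        · exact h
        · norm_num at h
      have : k = -N := by
        have : ((k : ℤ) : ℂ) = ((-N : ℤ) : ℂ) := by push_cast; linear_combination h1
        exact_mod_cast this
      simp [hdeg] at ha1 ha2
      omega
/-- if `v ∈ tsns ⊗ tsns` satisfies `x ∗ v ∈ Im(1⊗1−τ)` for all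
`x ∈ tsns`, then there is `u ∈ Im(1⊗1−τ)` with `v − u ∈ ℂM₀⊗M₀`. -/
theorem skew_image_mod_center (v : T2)
    (h : ∀ x : Tsns, star2 x v ∈ ImSkew) :
    ∃ u ∈ ImSkew, v - u ∈ CC := by
  classical
  set B : ℤ := ((v.support.sup fun p => (hdeg p.1).natAbs ⊔ (hdeg p.2).natAbs : ℕ) : ℤ) with hBdef
  have hB : 0 ≤ B := Int.ofNat_nonneg _
  have Hsupp : ∀ p ∈ v.support, |hdeg p.1| ≤ B ∧ |hdeg p.2| ≤ B := by
    intro p hp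
    have h1 : (hdeg p.1).natAbs ⊔ (hdeg p.2).natAbs ≤
        (v.support.sup fun p => (hdeg p.1).natAbs ⊔ (hdeg p.2).natAbs) :=
      Finset.le_sup (f := fun p => (hdeg p.1).natAbs ⊔ (hdeg p.2).natAbs) hp
    constructor
    · rw [Int.abs_eq_natAbs, hBdef]; exact_mod_cast le_trans (le_max_left _ _) h1
    · rw [Int.abs_eq_natAbs, hBdef]; exact_mod_cast le_trans (le_max_right _ _) h1
  set N : ℤ := 2*B + 2 with hNdef
  set s : T2 := v + tau v with hs
  have hsval : ∀ a b : TIdx, s (a, b) = v (a, b) + sg (parity b) (parity a) * v (b, a) := by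
    intro a b; rw [hs, Finsupp.add_apply, tau_apply]
  have hsbound : ∀ a b : TIdx, s (a, b) ≠ 0 → |hdeg a| ≤ B ∧ |hdeg b| ≤ B := by
    intro a b hab
    rw [hsval] at hab
    by_cases h1 : v (a, b) = 0
    · have h2 : v (b, a) ≠ 0 := by
        intro h2; rw [h1, h2, mul_zero, add_zero] at hab; exact hab rfl
      have := Hsupp (b, a) (Finsupp.mem_support_iff.mpr h2)
      exact ⟨this.2, this.1⟩
    · exact Hsupp (a, b) (Finsupp.mem_support_iff.mpr h1)
  have hw : star2 (bs (.L N)) v + tau (star2 (bs (.L N)) v) = 0 :=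
    mem_ImSkew_iff _ (h (bs (.L N)))
  have key : ∀ a b : TIdx, |hdeg a| ≤ B → |hdeg b| ≤ B → cN N a * s (a, b) = 0 := by
    intro a b ha hb
    have h0 := DFunLike.congr_fun hw (sN N a, b)
    rw [Finsupp.add_apply, Finsupp.zero_apply, tau_apply, parity_sN,
      eval1 B N hNdef hB v Hsupp a b ha, eval2 B N hNdef hB v Hsupp a b ha hb] at h0
    rw [hsval]
    linear_combination h0
  have hsupp_s : ∀ q ∈ s.support, q = ((TIdx.M 0 : TIdx), (TIdx.M 0 : TIdx)) := by
    intro q hq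
    obtain ⟨a, b⟩ := q
    have hab : s (a, b) ≠ 0 := Finsupp.mem_support_iff.mp hq
    obtain ⟨ha, hb⟩ := hsbound a b hab
    have ha0 : a = .M 0 := by
      rcases mul_eq_zero.mp (key a b ha hb) with h1 | h1
      · exact cN_eq_zero B N hNdef a ha h1
      · exact absurd h1 hab
    have hrel : s (a, b) = sg (parity b) (parity a) * s (b, a) := by
      rw [hsval, hsval, mul_add, ← mul_assoc, sg_comm (parity a) (parity b), sg_mul_self,
        one_mul, add_comm]
    have hsymm : s (b, a) ≠ 0 := by
      intro h1; apply hab; rw [hrel, h1, mul_zero]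
    have hb0 : b = .M 0 := by
      rcases mul_eq_zero.mp (key b a hb ha) with h1 | h1
      · exact cN_eq_zero B N hNdef b hb h1
      · exact absurd h1 hsymm
    rw [ha0, hb0]
  have hsub : s.support ⊆ {((TIdx.M 0 : TIdx), (TIdx.M 0 : TIdx))} := by
    intro q hq; exact Finset.mem_singleton.mpr (hsupp_s q hq)
  have hseq : s = Finsupp.single (TIdx.M 0, TIdx.M 0) (s (TIdx.M 0, TIdx.M 0)) :=
    Finsupp.support_subset_singleton.mp hsub
  have hsCC : s ∈ CC := by
    rw [hseq]
    have heq : Finsupp.single ((TIdx.M 0 : TIdx), (TIdx.M 0 : TIdx)) (s (TIdx.M 0, TIdx.M 0)) =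
        s (TIdx.M 0, TIdx.M 0) • Finsupp.single (TIdx.M 0, TIdx.M 0) (1 : ℂ) := by
      rw [Finsupp.smul_single, smul_eq_mul, mul_one]
    rw [heq]
    exact Submodule.smul_mem _ _ (Submodule.mem_span_singleton_self _)
  refine ⟨(LinearMap.id - tau : T2 →ₗ[ℂ] T2) ((2⁻¹ : ℂ) • v), ⟨_, rfl⟩, ?_⟩
  have hveq : v - (LinearMap.id - tau : T2 →ₗ[ℂ] T2) ((2⁻¹ : ℂ) • v) = (2⁻¹ : ℂ) • s := by
    simp only [LinearMap.sub_apply, LinearMap.id_apply, map_smul, hs]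
    module
  rw [hveq]
  exact Submodule.smul_mem _ _ hsCC
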